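/- Let P be a symmetric positive semidefinite n×n real matrix, V a symmetric positive semidefinite m×m real matrix, and B an m×n real matrix such that S = B P Bᵀ + V is positive definite (hence invertible). Define J : ℝ^{n×m} → ℝ by J(K) = trace((I − K B) P (I − K B)ᵀ + K V Kᵀ) and K* = P Bᵀ S⁻¹. Then for every n×m matrix K, J(K) = J(K*) + trace((K − K*) S (K − K*)ᵀ); consequently J(K) ≥ J(K*) for all K, with equality if and only if K = K*. Thus K* is the unique global minimizer of the sum of squared errors among all gain matrices. -/

import Mathlib

open Matrix

/-- The posterior error cost `J(K) = trace((I − K B) P (I − K B)ᵀ + K V Kᵀ)`. -/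
noncomputable def kalmanCost {n m : ℕ} (P : Matrix (Fin n) (Fin n) ℝ)
    (V : Matrix (Fin m) (Fin m) ℝ) (B : Matrix (Fin m) (Fin n) ℝ)
    (K : Matrix (Fin n) (Fin m) ℝ) : ℝ :=
  Matrix.trace ((1 - K * B) * P * (1 - K * B)ᵀ + K * V * Kᵀ)

/-- The Kalman gain `K* = P Bᵀ (B P Bᵀ + V)⁻¹`. -/
noncomputable def kalmanGain {n m : ℕ} (P : Matrix (Fin n) (Fin n) ℝ)
    (V : Matrix (Fin m) (Fin m) ℝ) (B : Matrix (Fin m) (Fin n) ℝ) :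
    Matrix (Fin n) (Fin m) ℝ :=
  P * Bᵀ * (B * P * Bᵀ + V)⁻¹

/-- **The Kalman gain is the unique global minimizer of the sum of squared errors.**
For `P`, `V` positive semidefinite with `S = B P Bᵀ + V` positive definite,
`J(K) = J(K*) + trace((K − K*) S (K − K*)ᵀ)` for every `K`, hence `J(K*) ≤ J(K)`
with equality iff `K = K*`. -/
theorem kalmanGain_unique_minimizer {n m : ℕ}
    (P : Matrix (Fin n) (Fin n) ℝ) (V : Matrix (Fin m) (Fin m) ℝ)
    (B : Matrix (Fin m) (Fin n) ℝ)
    (hP : P.PosSemidef) (hV : V.PosSemidef)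
    (hS : (B * P * Bᵀ + V).PosDef) :
    ∀ K : Matrix (Fin n) (Fin m) ℝ,
      kalmanCost P V B K = kalmanCost P V B (kalmanGain P V B) +
        Matrix.trace ((K - kalmanGain P V B) * (B * P * Bᵀ + V) *
          (K - kalmanGain P V B)ᵀ) ∧
      kalmanCost P V B (kalmanGain P V B) ≤ kalmanCost P V B K ∧
      (kalmanCost P V B K = kalmanCost P V B (kalmanGain P V B) ↔
        K = kalmanGain P V B) := by
  set S := B * P * Bᵀ + V with hSdef
  have hPt : Pᵀ = P := by
    have := hP.1; rwa [IsHermitian, conjTranspose_eq_transpose_of_trivial] at this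
  have hVt : Vᵀ = V := by
    have := hV.1; rwa [IsHermitian, conjTranspose_eq_transpose_of_trivial] at this
  have hSt : Sᵀ = S := by
    simp [hSdef, transpose_add, transpose_mul, hPt, hVt, Matrix.mul_assoc]
  have hdet : IsUnit S.det := hS.det_pos.ne'.isUnit
  have hKG : kalmanGain P V B = P * Bᵀ * S⁻¹ := rfl
  set Ks := P * Bᵀ * S⁻¹ with hKs
  have hKsS : Ks * S = P * Bᵀ := by
    rw [hKs, Matrix.mul_assoc, Matrix.nonsing_inv_mul S hdet, Matrix.mul_one]
  have hSKt : S * Ksᵀ = B * P := by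
    calc S * Ksᵀ = Sᵀ * Ksᵀ := by rw [hSt]
    _ = (Ks * S)ᵀ := (transpose_mul _ _).symm
    _ = (P * Bᵀ)ᵀ := by rw [hKsS]
    _ = B * P := by rw [transpose_mul, transpose_transpose, hPt]
  -- key matrix identity
  have key : ∀ K : Matrix (Fin n) (Fin m) ℝ,
      (1 - K * B) * P * (1 - K * B)ᵀ + K * V * Kᵀ =
      (P - Ks * (B * P)) + (K - Ks) * S * (K - Ks)ᵀ := by
    intro K
    have h1 : (K - Ks) * S * (K - Ks)ᵀ =
        K * S * Kᵀ - K * (B * P) - P * Bᵀ * Kᵀ + Ks * (B * P) := by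
      simp only [transpose_sub, Matrix.sub_mul, Matrix.mul_sub]
      rw [Matrix.mul_assoc K S Ksᵀ, hSKt, Matrix.mul_assoc Ks S Ksᵀ, hSKt, hKsS]
      abel
    have h2 : (1 - K * B) * P * (1 - K * B)ᵀ + K * V * Kᵀ =
        P - K * (B * P) - P * Bᵀ * Kᵀ + K * S * Kᵀ := by
      rw [hSdef]
      simp only [transpose_sub, transpose_one, transpose_mul, Matrix.sub_mul,
        Matrix.mul_sub, Matrix.add_mul, Matrix.mul_add, Matrix.mul_one,
        Matrix.one_mul, Matrix.mul_assoc]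
      abel
    rw [h1, h2]; abel
  -- cost decomposition
  have hcost : ∀ K : Matrix (Fin n) (Fin m) ℝ,
      kalmanCost P V B K = Matrix.trace (P - Ks * (B * P)) +
        Matrix.trace ((K - Ks) * S * (K - Ks)ᵀ) := by
    intro K
    rw [kalmanCost, key K, trace_add]
  have hcostKs : kalmanCost P V B Ks = Matrix.trace (P - Ks * (B * P)) := by
    rw [hcost Ks, sub_self, Matrix.zero_mul, Matrix.zero_mul, trace_zero, add_zero]
  -- positive semidefiniteness of the residual term
  have hpsd : ∀ K : Matrix (Fin n) (Fin m) ℝ,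
      ((K - Ks) * S * (K - Ks)ᵀ).PosSemidef := by
    intro K
    have := hS.posSemidef.mul_mul_conjTranspose_same (K - Ks)
    rwa [conjTranspose_eq_transpose_of_trivial] at this
  have hdiag_nonneg : ∀ (M : Matrix (Fin n) (Fin n) ℝ), M.PosSemidef →
      ∀ i, 0 ≤ M i i := by
    intro M hM i
    have := hM.dotProduct_mulVec_nonneg (Pi.single i 1)
    simpa [dotProduct, mulVec, Pi.single_apply, Finset.sum_ite_eq] using this
  have htr_nonneg : ∀ K : Matrix (Fin n) (Fin m) ℝ,
      0 ≤ Matrix.trace ((K - Ks) * S * (K - Ks)ᵀ) := by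
    intro K
    exact Finset.sum_nonneg fun i _ => hdiag_nonneg _ (hpsd K) i
  -- diagonal entries as quadratic forms
  have hdiag : ∀ (A : Matrix (Fin n) (Fin m) ℝ) (i : Fin n),
      (A * S * Aᵀ) i i = (A i) ⬝ᵥ (S *ᵥ (A i)) := by
    intro A i
    simp only [Matrix.mul_apply, Matrix.mulVec, dotProduct,
      transpose_apply, Finset.sum_mul, Finset.mul_sum]
    rw [Finset.sum_comm]
    apply Finset.sum_congr rfl
    intro j _
    apply Finset.sum_congr rfl
    intro k _
    ring
  -- trace zero implies equality
  have htr_zero : ∀ K : Matrix (Fin n) (Fin m) ℝ,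
      Matrix.trace ((K - Ks) * S * (K - Ks)ᵀ) = 0 → K = Ks := by
    intro K h0
    have hall : ∀ i ∈ Finset.univ, ((K - Ks) * S * (K - Ks)ᵀ) i (i : Fin n) = 0 := by
      rw [← Finset.sum_eq_zero_iff_of_nonneg
        (fun i _ => hdiag_nonneg _ (hpsd K) i)]
      exact h0
    have hrows : ∀ i : Fin n, (K - Ks) i = 0 := by
      intro i
      by_contra hne
      have hpos := hS.dotProduct_mulVec_pos hne
      rw [star_trivial] at hpos
      have := hall i (Finset.mem_univ i)
      rw [hdiag (K - Ks) i] at this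
      rw [this] at hpos
      exact lt_irrefl 0 hpos
    have : K - Ks = 0 := by
      ext i j
      have := congrFun (hrows i) j
      simpa using this
    exact sub_eq_zero.mp this
  intro K
  rw [hKG]
  refine ⟨by rw [hcost K, hcostKs], ?_, ?_⟩
  · rw [hcost K, hcostKs]
    exact le_add_of_nonneg_right (htr_nonneg K)
  · constructor
    · intro h
      rw [hcost K, hcostKs] at h
      have : Matrix.trace ((K - Ks) * S * (K - Ks)ᵀ) = 0 := by linarith
      exact htr_zero K this
    · intro h
      rw [h]
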